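/- If a generalized median voter scheme f^p satisfies p_{{i}} < p_{N\{i}} for some agent i and is NOM, then agent i is a dictator. -/
import Mathlib


/-- A preference profile: each agent `i : Fin n` has a strict preference,
modeled as a linear order on the set of alternatives `X`. -/
abbrev Profile (n : ℕ) (X : Type*) := Fin n → LinearOrder X

/-- The top (best) alternative of a preference `L`. -/
noncomputable def top {X : Type*} [Fintype X] [Nonempty X] (L : LinearOrder X) : X :=
  @Finset.max' X L Finset.univ Finset.univ_nonempty

/-- `x` is strictly preferred to `y` according to `L`. -/
def prefers {X : Type*} (L : LinearOrder X) (x y : X) : Prop := L.lt y x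

/-- The option set left open by preference `L` of agent `i` at rule `f`. -/
def OptionSet {n : ℕ} {X : Type*} (f : Profile n X → X) (i : Fin n) (L : LinearOrder X) :
    Set X :=
  {x | ∃ P : Profile n X, P i = L ∧ f P = x}

/-- `Li'` is a profitable manipulation of `f` at (true preference) `Li` for agent `i`. -/
def IsManip {n : ℕ} {X : Type*} (f : Profile n X → X) (i : Fin n)
    (Li Li' : LinearOrder X) : Prop :=
  ∃ P : Profile n X, P i = Li ∧ prefers Li (f (Function.update P i Li')) (f P)

/-- The worst element of `O(Li')` is strictly `Li`-preferred to the worst element of `O(Li)`.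
For nonempty finite option sets this is equivalent to: some element of `O(Li)` is strictly
worse (w.r.t. `Li`) than every element of `O(Li')`. -/
def WorstImproves {n : ℕ} {X : Type*} (f : Profile n X → X) (i : Fin n)
    (Li Li' : LinearOrder X) : Prop :=
  ∃ w ∈ OptionSet f i Li, ∀ w' ∈ OptionSet f i Li', prefers Li w' w

/-- The best element of `O(Li')` is strictly `Li`-preferred to the best element of `O(Li)`.
For nonempty finite option sets this is equivalent to: some element of `O(Li')` is strictly
better (w.r.t. `Li`) than every element of `O(Li)`. -/
def BestImproves {n : ℕ} {X : Type*} (f : Profile n X → X) (i : Fin n)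
    (Li Li' : LinearOrder X) : Prop :=
  ∃ b' ∈ OptionSet f i Li', ∀ b ∈ OptionSet f i Li, prefers Li b' b

/-- `Li'` is an obvious manipulation of `f` at `Li` for agent `i`. -/
def IsObviousManip {n : ℕ} {X : Type*} (f : Profile n X → X) (i : Fin n)
    (Li Li' : LinearOrder X) : Prop :=
  IsManip f i Li Li' ∧ (WorstImproves f i Li Li' ∨ BestImproves f i Li Li')

/-- `f` is not obviously manipulable. -/
def NOM {n : ℕ} {X : Type*} (f : Profile n X → X) : Prop :=
  ∀ (i : Fin n) (Li Li' : LinearOrder X), ¬ IsObviousManip f i Li Li'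

/-- `f` is tops-only. -/
def TopsOnly {n : ℕ} {X : Type*} [Fintype X] [Nonempty X] (f : Profile n X → X) : Prop :=
  ∀ P P' : Profile n X, (∀ i, top (P i) = top (P' i)) → f P = f P'

/-- The set `V_i` of alternatives that agent `i` vetoes via some preference. -/
def VetoSet {n : ℕ} {X : Type*} (f : Profile n X → X) (i : Fin n) : Set X :=
  {x | ∃ L : LinearOrder X, x ∉ OptionSet f i L}

/-- The set `SV_i` of alternatives strongly vetoed by agent `i`:
`x` is vetoed via `L` precisely when the top of `L` differs from `x`. -/
def StrongVetoSet {n : ℕ} {X : Type*} [Fintype X] [Nonempty X]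
    (f : Profile n X → X) (i : Fin n) : Set X :=
  {x | ∀ L : LinearOrder X, x ∉ OptionSet f i L ↔ top L ≠ x}

/-- `f` is dictatorial: some agent's top alternative is always selected. -/
def Dictatorial {n : ℕ} {X : Type*} [Fintype X] [Nonempty X]
    (f : Profile n X → X) : Prop :=
  ∃ i : Fin n, ∀ P : Profile n X, f P = top (P i)

/-- The ordered set of alternatives `X = {a, a+1, ..., b} ⊆ ℕ`. -/
abbrev Alt (a b : ℕ) : Type := {x : ℕ // x ∈ Finset.Icc a b}

/-- `p` is a monotonic family of fixed ballots: `p_N = a`, `p_∅ = b`, and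
`S ⊆ T` implies `p_T ≤ p_S`. -/
def MonotonicFamily {n a b : ℕ} (p : Finset (Fin n) → Alt a b) : Prop :=
  (p Finset.univ).val = a ∧ (p ∅).val = b ∧
    ∀ S T : Finset (Fin n), S ⊆ T → p T ≤ p S

/-- The generalized median voter scheme associated with the family `p`:
`f^p(P) = min_{S ⊆ N} max_{j ∈ S} {t(P_j), p_S}`. -/
noncomputable def gms {n a b : ℕ} [Nonempty (Alt a b)]
    (p : Finset (Fin n) → Alt a b) (P : Profile n (Alt a b)) : Alt a b :=
  Finset.univ.inf' ⟨∅, Finset.mem_univ _⟩ fun S : Finset (Fin n) =>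
    (insert (p S) (S.image fun j => top (P j))).max' (Finset.insert_nonempty _ _)

def kfun {a b : ℕ} (x z y : Alt a b) : ℕ :=
  if y = x then b + 2 else if y = z then 0 else y.val + 1

lemma kfun_inj {a b : ℕ} (x z : Alt a b) : Function.Injective (kfun x z) := by
  intro y1 y2 h
  have h1 := Finset.mem_Icc.mp y1.2
  have h2 := Finset.mem_Icc.mp y2.2
  unfold kfun at h
  split_ifs at h with p1 p2 p3 p4 p5 p6 p7 p8 p9 <;>
    first
      | (subst_vars; rfl)
      | omega
      | (exact Subtype.ext (by omega))

noncomputable def mkOrd {a b : ℕ} (x z : Alt a b) : LinearOrder (Alt a b) :=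
  LinearOrder.lift' (kfun x z) (kfun_inj x z)

lemma mkOrd_lt {a b : ℕ} (x z y1 y2 : Alt a b) :
    (mkOrd x z).lt y1 y2 ↔ kfun x z y1 < kfun x z y2 := Iff.rfl

lemma mkOrd_top {a b : ℕ} [Nonempty (Alt a b)] (x z : Alt a b) : top (mkOrd x z) = x := by
  have hle : ∀ y : Alt a b, (mkOrd x z).le y x := by
    intro y
    show kfun x z y ≤ kfun x z x
    have := Finset.mem_Icc.mp y.2
    have hx : kfun x z x = b + 2 := by simp [kfun]
    rw [hx]
    unfold kfun
    split_ifs <;> omega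
  refine @le_antisymm _ (mkOrd x z).toPartialOrder _ _ ?_ ?_
  · exact @Finset.max'_le _ (mkOrd x z) _ _ _ (fun y _ => hle y)
  · exact @Finset.le_max' _ (mkOrd x z) _ x (Finset.mem_univ x)

lemma mkOrd_worst {a b : ℕ} (x z y : Alt a b) (hzx : z ≠ x) (hyz : y ≠ z) :
    prefers (mkOrd x z) y z := by
  show (mkOrd x z).lt z y
  rw [mkOrd_lt]
  have hz : kfun x z z = 0 := by simp [kfun, hzx]
  rw [hz]
  unfold kfun
  split_ifs with h1 h2 <;> first | omega | (exact absurd h2 hyz)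

section GmsLemmas
variable {n a b : ℕ} [Nonempty (Alt a b)] (p : Finset (Fin n) → Alt a b)

lemma gms_le (P : Profile n (Alt a b)) (S : Finset (Fin n)) (m : Alt a b)
    (hpS : p S ≤ m) (ht : ∀ j ∈ S, top (P j) ≤ m) : gms p P ≤ m := by
  refine le_trans (Finset.inf'_le _ (Finset.mem_univ S)) ?_
  apply Finset.max'_le
  intro y hy
  rcases Finset.mem_insert.mp hy with h | h
  · exact h ▸ hpS
  · obtain ⟨j, hj, rfl⟩ := Finset.mem_image.mp h
    exact ht j hj

lemma le_gms (P : Profile n (Alt a b)) (m : Alt a b)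
    (h : ∀ S : Finset (Fin n), m ≤ p S ∨ ∃ j ∈ S, m ≤ top (P j)) :
    m ≤ gms p P := by
  apply Finset.le_inf'
  intro S _
  rcases h S with h | ⟨j, hj, hm⟩
  · exact le_trans h (Finset.le_max' _ _ (Finset.mem_insert_self _ _))
  · refine le_trans hm (Finset.le_max' _ _ ?_)
    exact Finset.mem_insert_of_mem (Finset.mem_image_of_mem _ hj)

lemma gms_eq_top (hp : MonotonicFamily p) (i : Fin n) (P : Profile n (Alt a b))
    (h1 : p {i} ≤ top (P i)) (h2 : top (P i) ≤ p (Finset.univ.erase i)) :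
    gms p P = top (P i) := by
  refine le_antisymm ?_ ?_
  · refine gms_le p P {i} _ h1 ?_
    intro j hj
    rw [Finset.mem_singleton] at hj
    subst hj; exact le_refl _
  · apply le_gms
    intro S
    by_cases hiS : i ∈ S
    · exact Or.inr ⟨i, hiS, le_refl _⟩
    · refine Or.inl (le_trans h2 (hp.2.2 _ _ ?_))
      intro j hj
      exact Finset.mem_erase.mpr ⟨fun h => hiS (h ▸ hj), Finset.mem_univ _⟩

end GmsLemmas

section MainAux
variable {n a b : ℕ} [Nonempty (Alt a b)]

lemma alt_le_iff {x y : Alt a b} : x ≤ y ↔ x.val ≤ y.val := Iff.rfl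
lemma alt_lt_iff {x y : Alt a b} : x < y ↔ x.val < y.val := Iff.rfl

lemma exists_ne_mem {S : Finset (Fin n)} {i : Fin n} (hiS : i ∈ S) (hS : S ≠ {i}) :
    ∃ j ∈ S, j ≠ i := by
  by_contra hc
  push_neg at hc
  exact hS (Finset.eq_singleton_iff_unique_mem.mpr ⟨hiS, hc⟩)

lemma case1 (hab : a ≤ b) (p : Finset (Fin n) → Alt a b) (hp : MonotonicFamily p)
    (i : Fin n) (hlt : p {i} < p (Finset.univ.erase i)) (hnom : NOM (gms p))
    (h : (p {i}).val ≠ a) : False := by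
  have hmem := Finset.mem_Icc.mp (p {i}).2
  have hmemq := Finset.mem_Icc.mp (p (Finset.univ.erase i)).2
  set a_ : Alt a b := ⟨a, Finset.mem_Icc.mpr ⟨le_refl a, hab⟩⟩ with ha_
  set b_ : Alt a b := ⟨b, Finset.mem_Icc.mpr ⟨hab, le_refl b⟩⟩ with hb_
  set L : LinearOrder (Alt a b) := mkOrd a_ (p {i}) with hL
  set L' : LinearOrder (Alt a b) := mkOrd (p (Finset.univ.erase i)) a_ with hL'
  set B : LinearOrder (Alt a b) := mkOrd b_ a_ with hB
  set P0 : Profile n (Alt a b) := Function.update (fun _ => B) i L with hP0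
  have hP0i : P0 i = L := by simp [hP0]
  have hP0j : ∀ j, j ≠ i → P0 j = B := fun j hj => by simp [hP0, Function.update_of_ne hj]
  have htopL : top (P0 i) = a_ := by rw [hP0i, hL, mkOrd_top]
  -- gms p P0 = p {i}
  have hfP0 : gms p P0 = p {i} := by
    refine le_antisymm ?_ ?_
    · refine gms_le p P0 {i} (p {i}) (le_refl _) ?_
      intro j hj
      rw [Finset.mem_singleton] at hj
      subst hj
      rw [htopL]
      exact alt_le_iff.mpr hmem.1
    · apply le_gms
      intro S
      by_cases hS : S = {i}
      · subst hS; exact Or.inl (le_refl _)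
      · by_cases hiS : i ∈ S
        · obtain ⟨j, hjS, hji⟩ := exists_ne_mem hiS hS
          refine Or.inr ⟨j, hjS, ?_⟩
          rw [hP0j j hji, hB, mkOrd_top]
          exact alt_le_iff.mpr hmem.2
        · refine Or.inl (le_trans hlt.le (hp.2.2 _ _ ?_))
          intro j hj
          exact Finset.mem_erase.mpr ⟨fun hh => hiS (hh ▸ hj), Finset.mem_univ _⟩
  -- gms p (update P0 i L') = p (erase i)
  have hupdtop : top (Function.update P0 i L' i) = p (Finset.univ.erase i) := by
    rw [Function.update_self, hL', mkOrd_top]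
  have hfupd : gms p (Function.update P0 i L') = p (Finset.univ.erase i) := by
    rw [← hupdtop]
    exact gms_eq_top p hp i _ (by rw [hupdtop]; exact hlt.le) (by rw [hupdtop])
  have hpref : prefers L (p (Finset.univ.erase i)) (p {i}) := by
    refine mkOrd_worst a_ (p {i}) _ ?_ ?_
    · exact fun hc => h (congrArg Subtype.val hc)
    · exact hlt.ne'
  refine hnom i L L' ⟨⟨P0, hP0i, ?_⟩, Or.inl ⟨p {i}, ⟨P0, hP0i, hfP0⟩, ?_⟩⟩
  · rw [hfupd, hfP0]; exact hpref
  · rintro w' ⟨P', hP'i, rfl⟩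
    have htop' : top (P' i) = p (Finset.univ.erase i) := by rw [hP'i, hL', mkOrd_top]
    have : gms p P' = p (Finset.univ.erase i) := by
      rw [← htop']
      exact gms_eq_top p hp i _ (by rw [htop']; exact hlt.le) (by rw [htop'])
    rw [this]
    exact hpref

lemma case2 (hab : a ≤ b) (p : Finset (Fin n) → Alt a b) (hp : MonotonicFamily p)
    (i : Fin n) (hlt : p {i} < p (Finset.univ.erase i)) (hnom : NOM (gms p))
    (h : (p (Finset.univ.erase i)).val ≠ b) : False := by
  have hmem := Finset.mem_Icc.mp (p {i}).2
  have hmemq := Finset.mem_Icc.mp (p (Finset.univ.erase i)).2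
  set a_ : Alt a b := ⟨a, Finset.mem_Icc.mpr ⟨le_refl a, hab⟩⟩ with ha_
  set b_ : Alt a b := ⟨b, Finset.mem_Icc.mpr ⟨hab, le_refl b⟩⟩ with hb_
  set L : LinearOrder (Alt a b) := mkOrd b_ (p (Finset.univ.erase i)) with hL
  set L' : LinearOrder (Alt a b) := mkOrd (p {i}) b_ with hL'
  set A : LinearOrder (Alt a b) := mkOrd a_ b_ with hA
  set P0 : Profile n (Alt a b) := Function.update (fun _ => A) i L with hP0
  have hP0i : P0 i = L := by simp [hP0]
  have hP0j : ∀ j, j ≠ i → P0 j = A := fun j hj => by simp [hP0, Function.update_of_ne hj]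
  have htopL : top (P0 i) = b_ := by rw [hP0i, hL, mkOrd_top]
  have hfP0 : gms p P0 = p (Finset.univ.erase i) := by
    refine le_antisymm ?_ ?_
    · refine gms_le p P0 (Finset.univ.erase i) _ (le_refl _) ?_
      intro j hj
      rw [hP0j j (Finset.mem_erase.mp hj).1, hA, mkOrd_top]
      exact alt_le_iff.mpr hmemq.1
    · apply le_gms
      intro S
      by_cases hiS : i ∈ S
      · refine Or.inr ⟨i, hiS, ?_⟩
        rw [htopL]
        exact alt_le_iff.mpr hmemq.2
      · refine Or.inl (hp.2.2 _ _ ?_)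
        intro j hj
        exact Finset.mem_erase.mpr ⟨fun hh => hiS (hh ▸ hj), Finset.mem_univ _⟩
  have hupdtop : top (Function.update P0 i L' i) = p {i} := by
    rw [Function.update_self, hL', mkOrd_top]
  have hfupd : gms p (Function.update P0 i L') = p {i} := by
    rw [← hupdtop]
    exact gms_eq_top p hp i _ (by rw [hupdtop]) (by rw [hupdtop]; exact hlt.le)
  have hpref : prefers L (p {i}) (p (Finset.univ.erase i)) := by
    refine mkOrd_worst b_ (p (Finset.univ.erase i)) _ ?_ ?_
    · exact fun hc => h (congrArg Subtype.val hc)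
    · exact hlt.ne
  refine hnom i L L' ⟨⟨P0, hP0i, ?_⟩, Or.inl ⟨p (Finset.univ.erase i), ⟨P0, hP0i, hfP0⟩, ?_⟩⟩
  · rw [hfupd, hfP0]; exact hpref
  · rintro w' ⟨P', hP'i, rfl⟩
    have htop' : top (P' i) = p {i} := by rw [hP'i, hL', mkOrd_top]
    have : gms p P' = p {i} := by
      rw [← htop']
      exact gms_eq_top p hp i _ (by rw [htop']) (by rw [htop']; exact hlt.le)
    rw [this]
    exact hpref

end MainAux

/-- If a generalized median voter scheme satisfies `p_{{i}} < p_{N\{i}}` for some agent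
`i` and is NOM, then agent `i` is a dictator. -/
theorem gms_dictator {n a b : ℕ} [Nonempty (Alt a b)]
    (hn : 2 ≤ n) (hab : a ≤ b)
    (p : Finset (Fin n) → Alt a b) (hp : MonotonicFamily p) (i : Fin n)
    (hlt : p {i} < p (Finset.univ.erase i)) (hnom : NOM (gms p)) :
    ∀ P : Profile n (Alt a b), gms p P = top (P i) := by
  have hra : (p {i}).val = a := by
    by_contra h
    exact case1 hab p hp i hlt hnom h
  have hqb : (p (Finset.univ.erase i)).val = b := by
    by_contra h
    exact case2 hab p hp i hlt hnom h
  intro P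
  have hmem := Finset.mem_Icc.mp (top (P i)).2
  refine gms_eq_top p hp i P ?_ ?_
  · exact alt_le_iff.mpr (by rw [hra]; exact hmem.1)
  · exact alt_le_iff.mpr (by rw [hqb]; exact hmem.2)
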